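/- Let ν be a Borel probability measure on ℝ^d. For each l ∈ ℕ, suppose given sequences of points b_{i,l}, e_{i,l} ∈ ℝ^d (i ∈ ℕ) with |e_{i,l} − b_{i,l}| ≤ l for all i, such that for every φ ∈ C_0(ℝ^d), lim_{n→∞} (1/n) Σ_{i=1}^n φ(b_{i,l}) = ∫ φ dν and lim_{n→∞} (1/n) Σ_{i=1}^n φ(e_{i,l}) = ∫ φ dν. Then limsup_{l→∞} limsup_{n→∞} (1/(n·l)) Σ_{i=1}^n |e_{i,l} − b_{i,l}| = 0. -/

import Mathlib

open MeasureTheory Filter Topology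
open scoped ENNReal ZeroAtInfty
noncomputable section

def bumpC0 (E : Type*) [NormedAddCommGroup E] [ProperSpace E] (R : ℝ) : C₀(E, ℝ) where
  toFun x := min 1 (max 0 (R + 1 - ‖x‖))
  continuous_toFun := by fun_prop
  zero_at_infty' := by
    refine Tendsto.congr' ?_ (tendsto_const_nhds : Tendsto (fun _ : E => (0:ℝ)) (cocompact E) (𝓝 0))
    filter_upwards [(tendsto_norm_cocompact_atTop (E := E)).eventually_ge_atTop (R + 1)] with x hx
    have : R + 1 - ‖x‖ ≤ 0 := by linarith
    simp [max_eq_left this]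

variable {E : Type*} [NormedAddCommGroup E] [ProperSpace E] {R : ℝ}

lemma bumpC0_nonneg (x : E) : 0 ≤ bumpC0 E R x :=
  le_min zero_le_one (le_max_left _ _)

lemma bumpC0_le_one (x : E) : bumpC0 E R x ≤ 1 := min_le_left _ _

lemma bumpC0_eq_one {x : E} (hx : ‖x‖ ≤ R) : bumpC0 E R x = 1 := by
  have : (1:ℝ) ≤ max 0 (R + 1 - ‖x‖) := le_max_of_le_right (by linarith)
  simp [bumpC0, min_eq_left this]

lemma bumpC0_eq_zero {x : E} (hx : R + 1 ≤ ‖x‖) : bumpC0 E R x = 0 := by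
  have : R + 1 - ‖x‖ ≤ 0 := by linarith
  simp [bumpC0, max_eq_left this]

lemma integral_bumpC0_ge [MeasurableSpace E] [OpensMeasurableSpace E]
    (ν : Measure E) [IsFiniteMeasure ν] :
    (ν (Metric.closedBall 0 R)).toReal ≤ ∫ x, bumpC0 E R x ∂ν := by
  have hint : Integrable (fun x => bumpC0 E R x) ν := (bumpC0 E R).toBCF.integrable ν
  have h1 : ∫ x in Metric.closedBall (0:E) R, bumpC0 E R x ∂ν
      = (ν (Metric.closedBall 0 R)).toReal := by
    rw [setIntegral_congr_fun (measurableSet_closedBall) (fun x hx => by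
      simpa [Metric.mem_closedBall, dist_zero_right] using bumpC0_eq_one (by
        simpa [Metric.mem_closedBall, dist_zero_right] using hx))]
    simp
    rfl
  rw [← h1]
  exact setIntegral_le_integral hint (Eventually.of_forall fun x => bumpC0_nonneg x)

/-- Let `ν` be a Borel probability measure on `ℝ^d`.  For each `l ∈ ℕ`
suppose given points `b_{i,l}, e_{i,l} ∈ ℝ^d` with `|e_{i,l} - b_{i,l}| ≤ l`, whose empirical
averages converge, for every `φ ∈ C₀(ℝ^d)`, to `∫ φ dν` (both for the `b`'s and the `e`'s).
Then `limsup_l limsup_n (1/(n·l)) Σ_{i=1}^n |e_{i,l} - b_{i,l}| = 0`. -/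
theorem stmt13 (d : ℕ)
    (ν : Measure (EuclideanSpace ℝ (Fin d))) [IsProbabilityMeasure ν]
    (b e : ℕ → ℕ → EuclideanSpace ℝ (Fin d))  -- `b l i` is the point `b_{i,l}`
    (hbe : ∀ l i, ‖e l i - b l i‖ ≤ (l : ℝ))
    (hb : ∀ l, ∀ φ : C₀(EuclideanSpace ℝ (Fin d), ℝ),
      Tendsto (fun n : ℕ => (1 / (n : ℝ)) * ∑ i ∈ Finset.range n, φ (b l i))
        atTop (𝓝 (∫ x, φ x ∂ν)))
    (he : ∀ l, ∀ φ : C₀(EuclideanSpace ℝ (Fin d), ℝ),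
      Tendsto (fun n : ℕ => (1 / (n : ℝ)) * ∑ i ∈ Finset.range n, φ (e l i))
        atTop (𝓝 (∫ x, φ x ∂ν))) :
    Filter.limsup
      (fun l : ℕ =>
        Filter.limsup
          (fun n : ℕ => (1 / ((n : ℝ) * l)) * ∑ i ∈ Finset.range n, ‖e l i - b l i‖)
          atTop)
      atTop = 0 := by
  set a : ℕ → ℕ → ℝ :=
    fun l n => (1 / ((n : ℝ) * l)) * ∑ i ∈ Finset.range n, ‖e l i - b l i‖ with haa
  have hgoal : (fun l : ℕ =>
      Filter.limsup
        (fun n : ℕ => (1 / ((n : ℝ) * l)) * ∑ i ∈ Finset.range n, ‖e l i - b l i‖)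
        atTop) = fun l => limsup (a l) atTop := rfl
  rw [hgoal]
  set L : ℕ → ℝ := fun l => limsup (a l) atTop with hLL
  have ha0 : ∀ l n, 0 ≤ a l n := fun l n =>
    mul_nonneg (by positivity) (Finset.sum_nonneg fun i _ => norm_nonneg _)
  have ha1 : ∀ l n, a l n ≤ 1 := by
    intro l n
    by_cases h : ((n : ℝ) * l) = 0
    · rcases mul_eq_zero.1 h with hn | hl
      · have hn' : n = 0 := by exact_mod_cast hn
        subst hn'
        simp [haa]
      · have hl' : l = 0 := by exact_mod_cast hl
        have hsum : ∑ i ∈ Finset.range n, ‖e l i - b l i‖ = 0 :=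
          Finset.sum_eq_zero fun i _ =>
            le_antisymm (by simpa [hl'] using hbe l i) (norm_nonneg _)
        simp [haa, hsum]
    · have hpos : (0:ℝ) < (n : ℝ) * l := lt_of_le_of_ne (by positivity) (Ne.symm h)
      have hsum : ∑ i ∈ Finset.range n, ‖e l i - b l i‖ ≤ (n : ℝ) * l := by
        calc ∑ i ∈ Finset.range n, ‖e l i - b l i‖
            ≤ ∑ _i ∈ Finset.range n, (l:ℝ) := Finset.sum_le_sum fun i _ => hbe l i
          _ = (n : ℝ) * l := by simp [Finset.sum_const, Finset.card_range]
      have h2 := mul_le_mul_of_nonneg_left hsum (le_of_lt (one_div_pos.2 hpos))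
      rw [one_div_mul_cancel h] at h2
      exact h2
  have hcobL : ∀ l, IsCoboundedUnder (· ≤ ·) atTop (a l) :=
    fun l => isCoboundedUnder_le_of_le atTop (ha0 l)
  have hbddL : ∀ l, IsBoundedUnder (· ≤ ·) atTop (a l) :=
    fun l => isBoundedUnder_of ⟨1, fun n => ha1 l n⟩
  have hL0 : ∀ l, 0 ≤ L l :=
    fun l => le_limsup_of_frequently_le (Frequently.of_forall (ha0 l)) (hbddL l)
  have hL1 : ∀ l, L l ≤ 1 :=
    fun l => limsup_le_of_le (hcobL l) (Eventually.of_forall (ha1 l))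
  have hmain : ∀ ε : ℝ, 0 < ε → ∀ᶠ l in atTop, L l ≤ ε := by
    intro ε hε
    set ε' := ε / 3 with hε'
    have hε'pos : 0 < ε' := by positivity
    -- choose R
    obtain ⟨R, hR⟩ : ∃ R : ℕ,
        1 - ε' ≤ (ν (Metric.closedBall (0 : EuclideanSpace ℝ (Fin d)) R)).toReal := by
      have hmono : Monotone (fun n : ℕ => Metric.closedBall (0 : EuclideanSpace ℝ (Fin d)) n) :=
        fun i j hij => Metric.closedBall_subset_closedBall (by exact_mod_cast hij)
      have htend := tendsto_measure_iUnion_atTop (μ := ν) hmono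
      rw [Metric.iUnion_closedBall_nat, measure_univ] at htend
      have htendR : Tendsto
          (fun n : ℕ => (ν (Metric.closedBall (0 : EuclideanSpace ℝ (Fin d)) n)).toReal)
          atTop (𝓝 1) := by
        have := (ENNReal.tendsto_toReal (by simp : (1 : ℝ≥0∞) ≠ ⊤)).comp htend
        simp at this; exact this
      exact (htendR.eventually (eventually_ge_nhds (by linarith : 1 - ε' < 1))).exists
    set φ := bumpC0 (EuclideanSpace ℝ (Fin d)) R with hφ
    have hφint : 1 - ε' ≤ ∫ x, φ x ∂ν := le_trans hR (integral_bumpC0_ge ν)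
    -- key claim
    have hKC : ∀ l : ℕ, 1 ≤ l → L l ≤ 2 * ((R:ℝ) + 1) / l + 2 * ε' := by
      intro l hl
      have hl0 : (0:ℝ) < l := by exact_mod_cast hl
      have hbφ := hb l φ
      have heφ := he l φ
      set I := ∫ x, φ x ∂ν with hI
      set c : ℕ → ℝ := fun n => 2 * ((R:ℝ) + 1) / l
        + (1 - (1 / (n:ℝ)) * ∑ i ∈ Finset.range n, φ (b l i))
        + (1 - (1 / (n:ℝ)) * ∑ i ∈ Finset.range n, φ (e l i)) with hc
      have hctend : Tendsto c atTop (𝓝 (2 * ((R:ℝ) + 1) / l + (1 - I) + (1 - I))) :=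
        ((tendsto_const_nhds.add (tendsto_const_nhds.sub hbφ)).add
          (tendsto_const_nhds.sub heφ))
      have hle : ∀ᶠ n in atTop, a l n ≤ c n := by
        filter_upwards [eventually_ge_atTop 1] with n hn
        have hn0 : (0:ℝ) < n := by exact_mod_cast hn
        have key : ∀ i ∈ Finset.range n, ‖e l i - b l i‖
            ≤ 2 * ((R:ℝ) + 1) + (l:ℝ) * (1 - φ (b l i)) + (l:ℝ) * (1 - φ (e l i)) := by
          intro i _
          have h1 : 0 ≤ (l:ℝ) * (1 - φ (b l i)) :=
            mul_nonneg hl0.le (sub_nonneg.2 (bumpC0_le_one _))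
          have h2 : 0 ≤ (l:ℝ) * (1 - φ (e l i)) :=
            mul_nonneg hl0.le (sub_nonneg.2 (bumpC0_le_one _))
          have hRpos : (0:ℝ) ≤ 2 * ((R:ℝ) + 1) := by positivity
          by_cases hbR : ‖b l i‖ ≤ (R:ℝ) + 1
          · by_cases heR : ‖e l i‖ ≤ (R:ℝ) + 1
            · have := norm_sub_le (e l i) (b l i)
              linarith
            · have hz : φ (e l i) = 0 := bumpC0_eq_zero (not_le.1 heR).le
              have := hbe l i
              rw [hz] at h2 ⊢
              simp only [sub_zero, mul_one] at h2 ⊢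
              linarith
          · have hz : φ (b l i) = 0 := bumpC0_eq_zero (not_le.1 hbR).le
            have := hbe l i
            rw [hz]
            simp only [sub_zero, mul_one]
            linarith
        have hsum : ∑ i ∈ Finset.range n, ‖e l i - b l i‖
            ≤ (n:ℝ) * (2 * ((R:ℝ) + 1))
              + (l:ℝ) * ((n:ℝ) - ∑ i ∈ Finset.range n, φ (b l i))
              + (l:ℝ) * ((n:ℝ) - ∑ i ∈ Finset.range n, φ (e l i)) := by
          calc ∑ i ∈ Finset.range n, ‖e l i - b l i‖
              ≤ ∑ i ∈ Finset.range n, (2 * ((R:ℝ) + 1) + (l:ℝ) * (1 - φ (b l i))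
                  + (l:ℝ) * (1 - φ (e l i))) := Finset.sum_le_sum key
            _ = _ := by
                simp [Finset.sum_add_distrib, Finset.mul_sum, Finset.sum_sub_distrib,
                  Finset.sum_const, Finset.card_range, mul_sub]
                ring
        have hdiv : (0:ℝ) ≤ 1 / ((n:ℝ) * l) := by positivity
        have := mul_le_mul_of_nonneg_left hsum hdiv
        refine le_trans this (le_of_eq ?_)
        rw [hc]
        field_simp
      calc L l ≤ limsup c atTop := limsup_le_limsup hle (hcobL l) hctend.isBoundedUnder_le
        _ = 2 * ((R:ℝ) + 1) / l + (1 - I) + (1 - I) := hctend.limsup_eq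
        _ ≤ 2 * ((R:ℝ) + 1) / l + 2 * ε' := by linarith
    obtain ⟨M, hM⟩ := exists_nat_ge (2 * ((R:ℝ) + 1) / ε')
    filter_upwards [eventually_ge_atTop (max 1 (M + 1))] with l hlM
    have hl1 : 1 ≤ l := le_trans (le_max_left _ _) hlM
    have hl2 : (M:ℝ) + 1 ≤ l := by exact_mod_cast le_trans (le_max_right _ _) hlM
    have hl0 : (0:ℝ) < l := by positivity
    have hfrac : 2 * ((R:ℝ) + 1) / l ≤ ε' := by
      rw [div_le_iff₀ hl0]
      have : 2 * ((R:ℝ) + 1) ≤ ε' * M := by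
        rw [div_le_iff₀ hε'pos] at hM
        linarith [mul_comm (ε') (M:ℝ)]
      nlinarith
    calc L l ≤ 2 * ((R:ℝ) + 1) / l + 2 * ε' := hKC l hl1
      _ ≤ ε' + 2 * ε' := by linarith
      _ = ε := by rw [hε']; ring
  refine le_antisymm ?_ ?_
  · by_contra hcon
    push_neg at hcon
    have hhalf : 0 < limsup L atTop / 2 := by linarith
    have := limsup_le_of_le (isCoboundedUnder_le_of_le atTop hL0) (hmain _ hhalf)
    linarith
  · exact le_limsup_of_frequently_le (Frequently.of_forall hL0) (isBoundedUnder_of ⟨1, hL1⟩)
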